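/- Convergence of the naive (Picard) iteration: assume every H_i has zero constant coefficient and J₀^p = 0 for some p ≥ 1, and let S be the unique solution of Y = H(z,Y) whose components have zero constant coefficients. Define Y^{[0]} = 0 and Y^{[n+1]} = (H_1(z,Y^{[n]}),…,H_m(z,Y^{[n]})). Then for every n ≥ 0 and every i, Y^{[np]}_i ≡ S_i mod z^{n+1}; in particular the iterates converge coefficientwise to S. -/

import Mathlib

/-- Substitution of a family `s` of one-variable formal power series (each intended to have
zero constant coefficient) into a multivariate formal power series `H` in `k` variables:
the coefficient of `z^n` in `H(s)` is the (finite) sum over all monomials `d` of the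
coefficient of `d` in `H` times the coefficient of `z^n` in `∏ j, (s j) ^ (d j)`.
When every `s j` has zero constant coefficient, only monomials `d` with
`∑ j, d j ≤ n` (in particular `d ≤ (n, …, n)`) can contribute, so this is the usual
well-defined substitution. -/
noncomputable def mvSubst {R : Type*} [CommSemiring R] {k : ℕ}
    (H : MvPowerSeries (Fin k) R) (s : Fin k → PowerSeries R) : PowerSeries R :=
  PowerSeries.mk fun n =>
    ∑ d ∈ Finset.Iic (Finsupp.equivFunOnFinite.symm fun _ : Fin k => n),
      MvPowerSeries.coeff d H * PowerSeries.coeff n (∏ j, (s j) ^ (d j))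


section PicardAux

open PowerSeries Finset

variable {R : Type*} [CommRing R]



lemma pic_prod_pow_single {k : ℕ} (f : Fin k → PowerSeries R) (u : Fin k) :
    ∏ v, f v ^ (Finsupp.single u 1 : Fin k →₀ ℕ) v = f u := by
  rw [Finset.prod_eq_single u]
  · simp
  · intro v _ hv; simp [Finsupp.single_apply, (Ne.symm hv)]
  · intro h; exact absurd (Finset.mem_univ u) h

lemma pic_exists_single {k : ℕ} (d : Fin k →₀ ℕ) (h : ∑ v, d v = 1) :
    ∃ u, d = Finsupp.single u 1 := by
  have hex : ∃ u, d u ≠ 0 := by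
    by_contra hc
    push_neg at hc
    simp [hc] at h
  obtain ⟨u, hu⟩ := hex
  have hsplit : d u + ∑ v ∈ Finset.univ.erase u, d v = 1 := by
    rw [Finset.add_sum_erase _ _ (Finset.mem_univ u)]; exact h
  have hdu : d u = 1 := by omega
  have hrest : ∑ v ∈ Finset.univ.erase u, d v = 0 := by omega
  refine ⟨u, ?_⟩
  ext v
  rcases eq_or_ne v u with rfl | hv
  · simp [hdu]
  · have : d v = 0 := by
      have := (Finset.sum_eq_zero_iff).1 hrest v (by simp [hv])
      exact this
    simp [this, Finsupp.single_apply, Ne.symm hv]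

lemma pic_zero_of_sum_zero {k : ℕ} (d : Fin k →₀ ℕ) (h : ∑ v, d v = 0) :
    ∀ v, d v = 0 := by
  intro v
  exact (Finset.sum_eq_zero_iff).1 h v (Finset.mem_univ v)

lemma pic_X_pow_dvd_prod {k : ℕ} (g : Fin k → PowerSeries R)
    (hg : ∀ u, (X : PowerSeries R) ∣ g u) (d : Fin k →₀ ℕ) :
    (X : PowerSeries R) ^ (∑ v, d v) ∣ ∏ v, g v ^ d v := by
  rw [← Finset.prod_pow_eq_pow_sum]
  exact Finset.prod_dvd_prod_of_dvd _ _ fun v _ => pow_dvd_pow_of_dvd (hg v) _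

lemma pic_key_dvd {k : ℕ} (N : ℕ) (f g : Fin k → PowerSeries R)
    (hf : ∀ u, (X : PowerSeries R) ∣ f u) (hg : ∀ u, (X : PowerSeries R) ∣ g u)
    (hfg : ∀ u, (X : PowerSeries R) ^ N ∣ f u - g u) :
    ∀ (c : ℕ) (d : Fin k →₀ ℕ), ∑ v, d v = c →
      (X : PowerSeries R) ^ (N + c) ∣ X * (∏ v, f v ^ d v - ∏ v, g v ^ d v) := by
  intro c
  induction c with
  | zero =>
    intro d hd
    have h0 := pic_zero_of_sum_zero d hd
    simp [h0]
  | succ c ih =>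
    intro d hd
    have hex : ∃ u, d u ≠ 0 := by
      by_contra hc
      push_neg at hc
      simp [hc] at hd
    obtain ⟨u, hu⟩ := hex
    set d' : Fin k →₀ ℕ := d - Finsupp.single u 1 with hd'
    have hdd : ∀ v, d v = d' v + (Finsupp.single u 1 : Fin k →₀ ℕ) v := by
      intro v
      rcases eq_or_ne v u with rfl | hv
      · simp [hd', Finsupp.single_apply]; omega
      · simp [hd', Finsupp.single_apply, Ne.symm hv, hv]
    have hsum' : ∑ v, d' v = c := by
      have : ∑ v, d v = ∑ v, d' v + ∑ v, (Finsupp.single u 1 : Fin k →₀ ℕ) v := by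
        rw [← Finset.sum_add_distrib]
        exact Finset.sum_congr rfl fun v _ => hdd v
      have hsing : ∑ v, (Finsupp.single u 1 : Fin k →₀ ℕ) v = 1 := by
        rw [Finset.sum_eq_single u] <;> simp [Finsupp.single_apply]
        intro v hv; simp [Ne.symm hv]
      omega
    have hfact : ∀ (h : Fin k → PowerSeries R),
        ∏ v, h v ^ d v = h u * ∏ v, h v ^ d' v := by
      intro h
      calc ∏ v, h v ^ d v = ∏ v, (h v ^ d' v * h v ^ (Finsupp.single u 1 : Fin k →₀ ℕ) v) := by
            refine Finset.prod_congr rfl fun v _ => ?_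
            rw [← pow_add, ← hdd v]
          _ = (∏ v, h v ^ d' v) * ∏ v, h v ^ (Finsupp.single u 1 : Fin k →₀ ℕ) v := by
            rw [Finset.prod_mul_distrib]
          _ = h u * ∏ v, h v ^ d' v := by
            rw [pic_prod_pow_single]; ring
    rw [hfact f, hfact g]
    have key : X * (f u * ∏ v, f v ^ d' v - g u * ∏ v, g v ^ d' v)
        = f u * (X * (∏ v, f v ^ d' v - ∏ v, g v ^ d' v))
          + (X * (f u - g u)) * ∏ v, g v ^ d' v := by ring
    rw [key]
    refine dvd_add ?_ ?_
    · have h1 : (X : PowerSeries R) ^ (N + c) ∣ X * (∏ v, f v ^ d' v - ∏ v, g v ^ d' v) :=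
        ih d' hsum'
      have : (X : PowerSeries R) ^ (N + (c+1)) = X * X ^ (N + c) := by ring
      rw [this]
      exact mul_dvd_mul (hf u) h1
    · have h1 : (X : PowerSeries R) ^ (N + 1) ∣ X * (f u - g u) := by
        have : (X : PowerSeries R) ^ (N + 1) = X * X ^ N := by ring
        rw [this]
        exact mul_dvd_mul_left X (hfg u)
      have h2 : (X : PowerSeries R) ^ c ∣ ∏ v, g v ^ d' v := by
        rw [← hsum']; exact pic_X_pow_dvd_prod g hg d'
      have : (X : PowerSeries R) ^ (N + (c+1)) = X ^ (N + 1) * X ^ c := by ring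
      rw [this]
      exact mul_dvd_mul h1 h2



lemma pic_constCoeff_prod {k : ℕ} (f : Fin k → PowerSeries R)
    (hf : ∀ u, constantCoeff (f u) = 0) (d : Fin k →₀ ℕ) (hd : d ≠ 0) :
    constantCoeff (∏ v, f v ^ d v) = 0 := by
  obtain ⟨u, hu⟩ := Finsupp.ne_iff.1 hd
  simp only [Finsupp.coe_zero, Pi.zero_apply] at hu
  rw [map_prod]
  refine Finset.prod_eq_zero (Finset.mem_univ u) ?_
  rw [map_pow, hf u, zero_pow hu]

lemma pic_constCoeff_mvSubst {k : ℕ} (H : MvPowerSeries (Fin k) R)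
    (s : Fin k → PowerSeries R) (hs : ∀ u, constantCoeff (s u) = 0) :
    constantCoeff (mvSubst H s) = MvPowerSeries.coeff 0 H := by
  rw [← PowerSeries.coeff_zero_eq_constantCoeff_apply]
  rw [mvSubst, PowerSeries.coeff_mk]
  rw [Finset.sum_eq_single (0 : Fin k →₀ ℕ)]
  · simp
  · intro d _ hd
    rw [PowerSeries.coeff_zero_eq_constantCoeff_apply, pic_constCoeff_prod s hs d hd, mul_zero]
  · intro h
    exact absurd (Finset.mem_Iic.2 (by exact bot_le)) h

lemma pic_step {m : ℕ} (H : Fin m → MvPowerSeries (Fin (m + 1)) R)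
    (s t : Fin m → PowerSeries R)
    (hs0 : ∀ l, constantCoeff (s l) = 0) (ht0 : ∀ l, constantCoeff (t l) = 0)
    (n : ℕ) (hst : ∀ l, ∀ j ≤ n, coeff j (s l) = coeff j (t l)) :
    ∀ i, ∀ j ≤ n + 1,
      coeff j (mvSubst (H i) (Fin.cons X s)) - coeff j (mvSubst (H i) (Fin.cons X t))
      = ∑ l, MvPowerSeries.coeff (Finsupp.single l.succ 1) (H i)
          * (coeff j (s l) - coeff j (t l)) := by
  intro i j hj
  set f : Fin (m+1) → PowerSeries R := Fin.cons X s with hf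
  set g : Fin (m+1) → PowerSeries R := Fin.cons X t with hg
  have hfX : ∀ u, (X : PowerSeries R) ∣ f u := by
    intro u
    refine Fin.cases ?_ ?_ u
    · simp [hf]
    · intro l; simp only [hf, Fin.cons_succ]; exact X_dvd_iff.2 (hs0 l)
  have hgX : ∀ u, (X : PowerSeries R) ∣ g u := by
    intro u
    refine Fin.cases ?_ ?_ u
    · simp [hg]
    · intro l; simp only [hg, Fin.cons_succ]; exact X_dvd_iff.2 (ht0 l)
  have hfg : ∀ u, (X : PowerSeries R) ^ (n + 1) ∣ f u - g u := by
    intro u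
    refine Fin.cases ?_ ?_ u
    · simp [hf, hg]
    · intro l
      simp only [hf, hg, Fin.cons_succ]
      rw [X_pow_dvd_iff]
      intro a ha
      rw [map_sub, hst l a (Nat.lt_succ_iff.1 ha), sub_self]
  -- key fact: if the total degree of d is not 1 then the coefficients of the products agree
  have hkey : ∀ d : Fin (m+1) →₀ ℕ, (∑ v, d v) ≠ 1 →
      coeff j (∏ v, f v ^ d v) = coeff j (∏ v, g v ^ d v) := by
    intro d hd1
    rcases Nat.eq_zero_or_pos (∑ v, d v) with h0 | hpos
    · have := pic_zero_of_sum_zero d h0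
      simp [this]
    · have h2 : 2 ≤ ∑ v, d v := by omega
      have hdvd := pic_key_dvd (n+1) f g hfX hgX hfg (∑ v, d v) d rfl
      have := (X_pow_dvd_iff.1 hdvd) (j + 1) (by omega)
      rw [coeff_succ_X_mul, map_sub, sub_eq_zero] at this
      exact this
  rcases Nat.eq_zero_or_pos j with rfl | hjpos
  · -- j = 0 : both sides vanish degree-wise
    have hc0 : ∀ u, constantCoeff (f u) = 0 := fun u => X_dvd_iff.1 (hfX u)
    have hc0' : ∀ u, constantCoeff (g u) = 0 := fun u => X_dvd_iff.1 (hgX u)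
    have hL : coeff 0 (mvSubst (H i) f) = coeff 0 (mvSubst (H i) g) := by
      rw [mvSubst, mvSubst, PowerSeries.coeff_mk, PowerSeries.coeff_mk]
      refine Finset.sum_congr rfl fun d _ => ?_
      congr 1
      rcases eq_or_ne d 0 with rfl | hd
      · simp
      · rw [PowerSeries.coeff_zero_eq_constantCoeff_apply,
          PowerSeries.coeff_zero_eq_constantCoeff_apply,
          pic_constCoeff_prod f hc0 d hd, pic_constCoeff_prod g hc0' d hd]
    rw [hL, sub_self]
    refine (Finset.sum_eq_zero fun l _ => ?_).symm
    rw [PowerSeries.coeff_zero_eq_constantCoeff_apply,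
      PowerSeries.coeff_zero_eq_constantCoeff_apply, hs0 l, ht0 l, sub_self, mul_zero]
  · -- j ≥ 1
    classical
    set c : Fin (m+1) →₀ ℕ := Finsupp.equivFunOnFinite.symm fun _ : Fin (m+1) => j with hc
    have hLHS : coeff j (mvSubst (H i) f) - coeff j (mvSubst (H i) g)
        = ∑ d ∈ Finset.Iic c, MvPowerSeries.coeff d (H i)
            * (coeff j (∏ v, f v ^ d v) - coeff j (∏ v, g v ^ d v)) := by
      rw [mvSubst, mvSubst, PowerSeries.coeff_mk, PowerSeries.coeff_mk,
        ← Finset.sum_sub_distrib]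
      exact Finset.sum_congr rfl fun d _ => by ring
    rw [hLHS]
    have hsub : (Finset.univ.image fun u : Fin (m+1) => (Finsupp.single u 1 : Fin (m+1) →₀ ℕ))
        ⊆ Finset.Iic c := by
      intro d hd
      simp only [Finset.mem_image] at hd
      obtain ⟨u, _, rfl⟩ := hd
      rw [Finset.mem_Iic, Finsupp.le_def]
      intro v
      have : (Finsupp.single u 1 : Fin (m+1) →₀ ℕ) v ≤ 1 := by
        rw [Finsupp.single_apply]; split <;> omega
      have hcv : c v = j := rfl
      omega
    rw [← Finset.sum_subset hsub ?_]
    · rw [Finset.sum_image ?_]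
      · rw [Fin.sum_univ_succ]
        have h0 : coeff j (∏ v, f v ^ (Finsupp.single (0 : Fin (m+1)) 1 : Fin (m+1) →₀ ℕ) v)
            - coeff j (∏ v, g v ^ (Finsupp.single (0 : Fin (m+1)) 1 : Fin (m+1) →₀ ℕ) v) = 0 := by
          rw [pic_prod_pow_single, pic_prod_pow_single]
          simp [hf, hg]
        rw [h0, mul_zero, zero_add]
        have : ∀ l : Fin m, MvPowerSeries.coeff (Finsupp.single l.succ 1) (H i)
            * (coeff j (∏ v, f v ^ (Finsupp.single l.succ 1 : Fin (m+1) →₀ ℕ) v)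
               - coeff j (∏ v, g v ^ (Finsupp.single l.succ 1 : Fin (m+1) →₀ ℕ) v))
            = MvPowerSeries.coeff (Finsupp.single l.succ 1) (H i)
            * (coeff j (s l) - coeff j (t l)) := by
          intro l
          rw [pic_prod_pow_single, pic_prod_pow_single]
          simp [hf, hg]
        exact Finset.sum_congr rfl fun l _ => this l
      · intro x _ y _ hxy
        exact Finsupp.single_left_injective (one_ne_zero) hxy
    · intro d hd hnd
      have hd1 : (∑ v, d v) ≠ 1 := by
        intro h1
        obtain ⟨u, rfl⟩ := pic_exists_single d h1
        exact hnd (Finset.mem_image.2 ⟨u, Finset.mem_univ u, rfl⟩)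
      rw [hkey d hd1, sub_self, mul_zero]

end PicardAux

open PowerSeries Finset in
/-- **Convergence of the naive (Picard) iteration.**  With `H` having zero constant
coefficients and `J₀ ^ p = 0` for some `p ≥ 1`, if `S` is the solution of `Y = H(z,Y)` with
zero constant coefficients and `Y 0 = 0`, `Y (n+1) = H(z, Y n)`, then `Y (n * p)` agrees
with `S` in all degrees `j ≤ n`, i.e. `Y^{[np]} ≡ S mod z^(n+1)`. -/
theorem picard_iteration_convergence {R : Type*} [CommRing R] {m : ℕ} (hm : 1 ≤ m)
    (H : Fin m → MvPowerSeries (Fin (m + 1)) R)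
    (hH0 : ∀ i, MvPowerSeries.coeff 0 (H i) = 0)
    (p : ℕ) (hp : 1 ≤ p)
    (hJp : (Matrix.of fun i j : Fin m =>
      MvPowerSeries.coeff (Finsupp.single j.succ 1) (H i)) ^ p = 0)
    (S : Fin m → PowerSeries R)
    (hS0 : ∀ i, PowerSeries.constantCoeff (S i) = 0)
    (hSfix : ∀ i, S i = mvSubst (H i) (Fin.cons PowerSeries.X S))
    (Y : ℕ → Fin m → PowerSeries R)
    (hY0 : Y 0 = 0)
    (hYrec : ∀ n i, Y (n + 1) i = mvSubst (H i) (Fin.cons PowerSeries.X (Y n))) :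
    ∀ n : ℕ, ∀ i, ∀ j ≤ n, PowerSeries.coeff j (Y (n * p) i) = PowerSeries.coeff j (S i) := by
  classical
  set J : Matrix (Fin m) (Fin m) R := Matrix.of fun i j : Fin m =>
    MvPowerSeries.coeff (Finsupp.single j.succ 1) (H i) with hJdef
  have hYc : ∀ k i, PowerSeries.constantCoeff (Y k i) = 0 := by
    intro k
    induction k with
    | zero => intro i; rw [hY0]; simp
    | succ k ihk =>
      intro i
      rw [hYrec k i, pic_constCoeff_mvSubst _ _ ?_, hH0 i]
      intro u
      refine Fin.cases ?_ ?_ u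
      · simp
      · intro l; simpa using ihk l
  intro n
  induction n with
  | zero =>
    intro i j hj
    interval_cases j
    rw [Nat.zero_mul, hY0]
    simp [hS0 i]
  | succ n ih =>
    have inner : ∀ k : ℕ,
        (∀ i, ∀ j ≤ n, PowerSeries.coeff j (Y (n * p + k) i) = PowerSeries.coeff j (S i)) ∧
        ((fun i => PowerSeries.coeff (n+1) (Y (n * p + k) i)
            - PowerSeries.coeff (n+1) (S i))
          = (J ^ k).mulVec fun i => PowerSeries.coeff (n+1) (Y (n * p) i)
              - PowerSeries.coeff (n+1) (S i)) := by
      intro k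
      induction k with
      | zero =>
        refine ⟨fun i j hj => by simpa using ih i j hj, ?_⟩
        rw [pow_zero, Matrix.one_mulVec]
        simp
      | succ k ihk =>
        have hstep := pic_step H (Y (n * p + k)) S (fun l => hYc _ l) hS0 n ihk.1
        have heq : ∀ i, ∀ j ≤ n + 1,
            PowerSeries.coeff j (Y (n * p + (k+1)) i) - PowerSeries.coeff j (S i)
            = ∑ l, J i l * (PowerSeries.coeff j (Y (n * p + k) l)
                - PowerSeries.coeff j (S l)) := by
          intro i j hj
          have h1 : Y (n * p + (k + 1)) i
              = mvSubst (H i) (Fin.cons PowerSeries.X (Y (n * p + k))) := hYrec _ i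
          rw [h1, hSfix i]
          exact hstep i j hj
        constructor
        · intro i j hj
          have := heq i j (hj.trans (Nat.le_succ n))
          rw [Finset.sum_eq_zero (fun l _ => by
            rw [ihk.1 l j hj, sub_self, mul_zero])] at this
          exact sub_eq_zero.1 this
        · funext i
          rw [heq i (n+1) le_rfl]
          have : ∑ l, J i l * (PowerSeries.coeff (n+1) (Y (n * p + k) l)
              - PowerSeries.coeff (n+1) (S l))
              = J.mulVec (fun l => PowerSeries.coeff (n+1) (Y (n * p + k) l)
                  - PowerSeries.coeff (n+1) (S l)) i := rfl
          rw [this, ihk.2, Matrix.mulVec_mulVec, ← pow_succ']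
    have hfin := inner p
    intro i j hj
    have hnp : (n + 1) * p = n * p + p := by ring
    rcases Nat.lt_succ_iff_lt_or_eq.1 (Nat.lt_succ_of_le hj) with h | rfl
    · rw [hnp]
      exact hfin.1 i j (Nat.lt_succ_iff.1 h)
    · have h2 := hfin.2
      rw [hJp, Matrix.zero_mulVec] at h2
      have := congrFun h2 i
      simp only [Pi.zero_apply] at this
      rw [hnp]
      exact sub_eq_zero.1 this
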